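/- For n sufficiently large, let G be the graph obtained from K_{⌈n/2⌉,⌊n/2⌋} by embedding a star K_{1,k−1} inside the part of size ⌊n/2⌋. Then G does not contain k edge-disjoint triangles, and ρ(G) > n/2. -/

import Mathlib

open Classical in
/-- Adjacency matrix of a simple graph over ℝ. -/
noncomputable def adjMat {V : Type*} [Fintype V] (G : SimpleGraph V) : Matrix V V ℝ :=
  Matrix.of fun i j => if G.Adj i j then (1 : ℝ) else 0

/-- Spectral radius: largest adjacency eigenvalue. -/
noncomputable def specRad {V : Type*} [Fintype V] (G : SimpleGraph V) : ℝ :=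
  sSup {t : ℝ | ∃ x : V → ℝ, x ≠ 0 ∧ (adjMat G).mulVec x = t • x}

/-- `G` contains two edge-disjoint cycles. -/
def HasTwoEdgeDisjointCycles {V : Type*} (G : SimpleGraph V) : Prop :=
  ∃ (u v : V) (c₁ : G.Walk u u) (c₂ : G.Walk v v),
    c₁.IsCycle ∧ c₂.IsCycle ∧ ∀ e ∈ c₁.edges, e ∉ c₂.edges

/-- `G` contains two distinct cycles (as subgraphs) of the same length. -/
def HasTwoCyclesSameLength {V : Type*} [DecidableEq V] (G : SimpleGraph V) : Prop :=
  ∃ (u v : V) (c₁ : G.Walk u u) (c₂ : G.Walk v v),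
    c₁.IsCycle ∧ c₂.IsCycle ∧ c₁.length = c₂.length ∧
      c₁.edges.toFinset ≠ c₂.edges.toFinset

/-- The edge set of a triangle given by a triple of vertices. -/
def triEdges {V : Type*} (t : V × V × V) : Set (Sym2 V) :=
  {s(t.1, t.2.1), s(t.2.1, t.2.2), s(t.1, t.2.2)}

/-- `G` contains `k` pairwise edge-disjoint triangles. -/
def HasEdgeDisjointTriangles {V : Type*} (G : SimpleGraph V) (k : ℕ) : Prop :=
  ∃ T : Fin k → V × V × V,
    (∀ i, G.Adj (T i).1 (T i).2.1 ∧ G.Adj (T i).2.1 (T i).2.2 ∧ G.Adj (T i).1 (T i).2.2) ∧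
    ∀ i j, i ≠ j → Disjoint (triEdges (T i)) (triEdges (T j))

/-- The star `K_{1,n-1}` (center `0`) plus an edge between the leaves `1` and `2`. -/
def starPlus (n : ℕ) : SimpleGraph (Fin n) :=
  SimpleGraph.fromRel (fun x y => x.val = 0 ∨ (x.val < 3 ∧ y.val < 3))

/-- `K₄ • K_{1,n-4}`: `K₄` on `{0,1,2,3}` with `0` joined to everything. -/
def K4Star (n : ℕ) : SimpleGraph (Fin n) :=
  SimpleGraph.fromRel (fun x y => x.val = 0 ∨ (x.val < 4 ∧ y.val < 4))

/-- `K_{3,3} • K_{1,n-6}`: `K_{3,3}` with parts `{0,1,2}`, `{3,4,5}`, and the vertex `0`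
identified with the center of a star with leaves `6,…,n-1`. -/
def K33Star (n : ℕ) : SimpleGraph (Fin n) :=
  SimpleGraph.fromRel (fun x y =>
    (x.val < 3 ∧ 3 ≤ y.val ∧ y.val < 6) ∨ (x.val = 0 ∧ 6 ≤ y.val))

/-- `K_{⌈n/2⌉,⌊n/2⌋}` with a star `K_{1,k-1}` (center `0`, leaves `1,…,k-1`) embedded
in the part `{0,…,⌊n/2⌋-1}` of size `⌊n/2⌋`. -/
def bipStar (n k : ℕ) : SimpleGraph (Fin n) :=
  SimpleGraph.fromRel (fun x y =>
    (x.val < n / 2 ∧ n / 2 ≤ y.val) ∨ (x.val = 0 ∧ 0 < y.val ∧ y.val < k))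

/-- `K_{⌈n/2⌉,⌊n/2⌋}` with a triangle `C₃` on `{0,1,2}` embedded in the part of size `⌊n/2⌋`. -/
def bipTri (n : ℕ) : SimpleGraph (Fin n) :=
  SimpleGraph.fromRel (fun x y =>
    (x.val < n / 2 ∧ n / 2 ≤ y.val) ∨ (x.val < 3 ∧ y.val < 3))

/-- `v` is a cut vertex of `G`. -/
def IsCutVertex {V : Type*} (G : SimpleGraph V) (v : V) : Prop :=
  ∃ a b : ({v}ᶜ : Set V), G.Reachable ↑a ↑b ∧ ¬ (G.induce ({v}ᶜ : Set V)).Reachable a b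

lemma bipStar_adj {n k : ℕ} (x y : Fin n) :
    (bipStar n k).Adj x y ↔
      (x.val < n / 2 ∧ n / 2 ≤ y.val) ∨ (y.val < n / 2 ∧ n / 2 ≤ x.val) ∨
        (x.val = 0 ∧ 0 < y.val ∧ y.val < k) ∨ (y.val = 0 ∧ 0 < x.val ∧ x.val < k) := by
  simp only [bipStar, SimpleGraph.fromRel_adj, ne_eq, Fin.ext_iff]
  omega

lemma pair_star {n k : ℕ} (hn : 0 < n) {x y : Fin n} (hx : x.val < n / 2) (hy : y.val < n / 2)
    (h : (bipStar n k).Adj x y) :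
    ∃ z : Fin n, 0 < z.val ∧ z.val < k ∧ s((⟨0, hn⟩ : Fin n), z) = s(x, y) := by
  rw [bipStar_adj] at h
  rcases h with h | h | h | h
  · omega
  · omega
  · exact ⟨y, h.2.1, h.2.2, by rw [show x = (⟨0, hn⟩ : Fin n) from Fin.ext h.1]⟩
  · exact ⟨x, h.2.1, h.2.2, by rw [show y = (⟨0, hn⟩ : Fin n) from Fin.ext h.1, Sym2.eq_swap]⟩

lemma high_pair {n k : ℕ} (hn : 2 ≤ n) {x y : Fin n} (hx : n / 2 ≤ x.val) (hy : n / 2 ≤ y.val)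
    (h : (bipStar n k).Adj x y) : False := by
  rw [bipStar_adj] at h
  omega

lemma tri_star {n k : ℕ} (hn : 2 ≤ n) {a b c : Fin n}
    (hab : (bipStar n k).Adj a b) (hbc : (bipStar n k).Adj b c)
    (hac : (bipStar n k).Adj a c) :
    ∃ z : Fin n, 0 < z.val ∧ z.val < k ∧
      s((⟨0, by omega⟩ : Fin n), z) ∈ triEdges (a, b, c) := by
  have hn0 : 0 < n := by omega
  by_cases ha : a.val < n / 2 <;> by_cases hb : b.val < n / 2 <;> by_cases hc : c.val < n / 2
  · obtain ⟨z, h1, h2, h3⟩ := pair_star hn0 ha hb hab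
    exact ⟨z, h1, h2, by rw [triEdges]; left; exact h3⟩
  · obtain ⟨z, h1, h2, h3⟩ := pair_star hn0 ha hb hab
    exact ⟨z, h1, h2, by rw [triEdges]; left; exact h3⟩
  · obtain ⟨z, h1, h2, h3⟩ := pair_star hn0 ha hc hac
    exact ⟨z, h1, h2, by rw [triEdges]; right; right; exact h3⟩
  · exact absurd hbc (fun h => high_pair hn (le_of_not_gt hb) (le_of_not_gt hc) h)
  · obtain ⟨z, h1, h2, h3⟩ := pair_star hn0 hb hc hbc
    exact ⟨z, h1, h2, by rw [triEdges]; right; left; exact h3⟩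
  · exact absurd hac (fun h => high_pair hn (le_of_not_gt ha) (le_of_not_gt hc) h)
  · exact absurd hab (fun h => high_pair hn (le_of_not_gt ha) (le_of_not_gt hb) h)
  · exact absurd hab (fun h => high_pair hn (le_of_not_gt ha) (le_of_not_gt hb) h)

lemma no_triangles {n k : ℕ} (hk : 2 ≤ k) (hn : 2 ≤ n) :
    ¬ HasEdgeDisjointTriangles (bipStar n k) k := by
  rintro ⟨T, hadj, hdisj⟩
  have hTri : ∀ i : Fin k, ∃ z : Fin n, 0 < z.val ∧ z.val < k ∧
      s((⟨0, by omega⟩ : Fin n), z) ∈ triEdges (T i) := fun i =>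
    tri_star hn (hadj i).1 (hadj i).2.1 (hadj i).2.2
  choose y hy1 hy2 hedge using hTri
  have hginj : Function.Injective (fun i : Fin k => (⟨(y i).val, hy2 i⟩ : Fin k)) := by
    intro i j hij
    by_contra hne
    simp only [Fin.mk.injEq] at hij
    have hyy : y i = y j := Fin.ext hij
    exact (Set.disjoint_left.mp (hdisj i j hne) (hedge i)) (by rw [hyy]; exact hedge j)
  have hsurj := Finite.surjective_of_injective hginj
  obtain ⟨i, hi⟩ := hsurj ⟨0, by omega⟩
  have := congrArg Fin.val hi
  simp only at this
  exact absurd (this ▸ hy1 i) (by omega)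

lemma cnt (n : ℕ) (p : ℕ → Prop) [DecidablePred p] :
    (∑ i : Fin n, (if p i.val then (1:ℝ) else 0)) = ((Finset.range n).filter p).card := by
  rw [Fin.sum_univ_eq_sum_range (fun i => if p i then (1:ℝ) else 0) n]
  simp [Finset.sum_boole]

lemma ind_mul (p q : Prop) [Decidable p] [Decidable q] :
    (if p ∧ q then (1:ℝ) else 0) = (if p then (1:ℝ) else 0) * (if q then (1:ℝ) else 0) := by
  by_cases p <;> by_cases q <;> simp [*]

open Matrix Module.End in
lemma exists_eigen_ge (n : ℕ) (hn : 0 < n) (A : Matrix (Fin n) (Fin n) ℝ) (hA : A.IsHermitian) :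
    ∃ t : ℝ, (∃ x : Fin n → ℝ, x ≠ 0 ∧ A.mulVec x = t • x) ∧
      ∀ x : EuclideanSpace ℝ (Fin n), x ≠ 0 →
        (inner ℝ ((Matrix.toEuclideanLin A) x) x : ℝ) / ‖x‖ ^ 2 ≤ t := by
  haveI : NeZero n := ⟨by omega⟩
  set T : EuclideanSpace ℝ (Fin n) →ₗ[ℝ] EuclideanSpace ℝ (Fin n) := Matrix.toEuclideanLin A with hT
  have hsym := (Matrix.isHermitian_iff_isSymmetric).mp hA
  have hev := hsym.hasEigenvalue_iSup_of_finiteDimensional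
  obtain ⟨v, hv1, hv0⟩ := hev.exists_hasEigenvector
  set μ : ℝ := (⨆ x : { x : EuclideanSpace ℝ (Fin n) // x ≠ 0 },
      RCLike.re (inner ℝ (T x) x : ℝ) / ‖(x : EuclideanSpace ℝ (Fin n))‖ ^ 2) with hμ
  refine ⟨μ, ⟨fun i => v i, ?_, ?_⟩, ?_⟩
  · intro h
    apply hv0
    ext i
    exact congrFun h i
  · have hvv : T v = μ • v := by
      have := hv1
      rw [Module.End.mem_eigenspace_iff] at this
      simpa using this
    funext i
    have := congrFun (congrArg (WithLp.equiv 2 (Fin n → ℝ)) hvv) i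
    simpa [hT, Matrix.toEuclideanLin_apply] using this
  · intro x hx
    have hbdd : BddAbove (Set.range fun x : { x : EuclideanSpace ℝ (Fin n) // x ≠ 0 } =>
        RCLike.re (inner ℝ (T x) x : ℝ) / ‖(x : EuclideanSpace ℝ (Fin n))‖ ^ 2) := by
      refine ⟨‖LinearMap.toContinuousLinearMap T‖, ?_⟩
      rintro r ⟨y, rfl⟩
      have hy0 : (0:ℝ) < ‖(y : EuclideanSpace ℝ (Fin n))‖ := norm_pos_iff.mpr y.2
      have h1 : (inner ℝ (T y) y : ℝ) ≤ ‖T (y : EuclideanSpace ℝ (Fin n))‖ * ‖(y : EuclideanSpace ℝ (Fin n))‖ :=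
        real_inner_le_norm _ _
      have h2 : ‖T (y : EuclideanSpace ℝ (Fin n))‖ ≤ ‖LinearMap.toContinuousLinearMap T‖ * ‖(y : EuclideanSpace ℝ (Fin n))‖ :=
        (LinearMap.toContinuousLinearMap T).le_opNorm _
      simp only [RCLike.re_to_real]
      rw [div_le_iff₀ (by positivity)]
      nlinarith [norm_nonneg (T (y : EuclideanSpace ℝ (Fin n)))]
    have := le_ciSup hbdd (⟨x, hx⟩ : { x : EuclideanSpace ℝ (Fin n) // x ≠ 0 })
    simpa [hμ] using this

lemma spec_bdd {n : ℕ} (G : SimpleGraph (Fin n)) (t : ℝ)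
    (ht : ∃ x : Fin n → ℝ, x ≠ 0 ∧ (adjMat G).mulVec x = t • x) : t ≤ n := by
  obtain ⟨x, hx0, hxe⟩ := ht
  rcases Nat.eq_zero_or_pos n with h0 | hpos
  · subst h0
    exact absurd (funext fun i => i.elim0 : x = 0) hx0
  obtain ⟨i, -, hmax⟩ := Finset.exists_max_image Finset.univ (fun j => |x j|)
    ⟨⟨0, hpos⟩, Finset.mem_univ _⟩
  have hxi : 0 < |x i| := by
    rcases (abs_nonneg (x i)).lt_or_eq with h | h
    · exact h
    · exfalso; apply hx0; funext j
      have := hmax j (Finset.mem_univ _)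
      rw [← h] at this
      exact abs_nonpos_iff.mp this
  have hrow : ∑ j, adjMat G i j * x j = t * x i := by
    have := congrFun hxe i
    simpa [Matrix.mulVec, dotProduct] using this
  have habs : |t| * |x i| ≤ n * |x i| := by
    calc |t| * |x i| = |t * x i| := (abs_mul t (x i)).symm
      _ = |∑ j, adjMat G i j * x j| := by rw [hrow]
      _ ≤ ∑ j, |adjMat G i j * x j| := Finset.abs_sum_le_sum_abs _ _
      _ ≤ ∑ _j : Fin n, |x i| := by
          refine Finset.sum_le_sum fun j _ => ?_
          rw [abs_mul]
          have h1 : |adjMat G i j| ≤ 1 := by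
            simp only [adjMat, Matrix.of_apply]
            split_ifs <;> norm_num
          have h2 : |x j| ≤ |x i| := hmax j (Finset.mem_univ _)
          nlinarith [abs_nonneg (x j), abs_nonneg (adjMat G i j)]
      _ = n * |x i| := by simp [Finset.sum_const, mul_comm]
  have : |t| ≤ n := le_of_mul_le_mul_right habs hxi
  exact le_trans (le_abs_self t) this

lemma adjMat_herm (n k : ℕ) : (adjMat (bipStar n k)).IsHermitian := by
  ext i j
  simp only [adjMat, Matrix.conjTranspose_apply, Matrix.of_apply, star_trivial]
  rw [SimpleGraph.adj_comm]

lemma sum_entries_ge {n k : ℕ} (hk : 2 ≤ k) (hn : 2*k+2 ≤ n) :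
    ((n/2 * (n - n/2) + (n - n/2) * (n/2) + (k-1) + (k-1) : ℕ) : ℝ) ≤
      ∑ i : Fin n, ∑ j : Fin n, adjMat (bipStar n k) i j := by
  have hkh : k ≤ n/2 := by omega
  have key : ∀ (p q : ℕ → Prop) [DecidablePred p] [DecidablePred q],
      (∑ i : Fin n, ∑ j : Fin n, (if p i.val ∧ q j.val then (1:ℝ) else 0))
        = (((Finset.range n).filter p).card : ℝ) * (((Finset.range n).filter q).card : ℝ) := by
    intro p q _ _
    simp_rw [ind_mul]
    rw [← Finset.sum_mul_sum, cnt, cnt]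
  have hpt : ∀ i j : Fin n,
      (if i.val < n/2 ∧ n/2 ≤ j.val then (1:ℝ) else 0)
      + (if n/2 ≤ i.val ∧ j.val < n/2 then (1:ℝ) else 0)
      + (if i.val = 0 ∧ (0 < j.val ∧ j.val < k) then (1:ℝ) else 0)
      + (if (0 < i.val ∧ i.val < k) ∧ j.val = 0 then (1:ℝ) else 0)
      ≤ adjMat (bipStar n k) i j := by
    intro i j
    simp only [adjMat, Matrix.of_apply]
    by_cases hadj : (bipStar n k).Adj i j
    · rw [if_pos hadj]
      rw [bipStar_adj] at hadj
      split_ifs <;> (try norm_num) <;> omega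
    · rw [if_neg hadj]
      rw [bipStar_adj] at hadj
      push_neg at hadj
      split_ifs <;> (try norm_num) <;> omega
  have hsum : (∑ i : Fin n, ∑ j : Fin n,
      ((if i.val < n/2 ∧ n/2 ≤ j.val then (1:ℝ) else 0)
      + (if n/2 ≤ i.val ∧ j.val < n/2 then (1:ℝ) else 0)
      + (if i.val = 0 ∧ (0 < j.val ∧ j.val < k) then (1:ℝ) else 0)
      + (if (0 < i.val ∧ i.val < k) ∧ j.val = 0 then (1:ℝ) else 0)))
      ≤ ∑ i : Fin n, ∑ j : Fin n, adjMat (bipStar n k) i j :=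
    Finset.sum_le_sum fun i _ => Finset.sum_le_sum fun j _ => hpt i j
  refine le_trans (le_of_eq ?_) hsum
  simp_rw [Finset.sum_add_distrib]
  rw [key (fun i => i < n/2) (fun j => n/2 ≤ j), key (fun i => n/2 ≤ i) (fun j => j < n/2),
    key (fun i => i = 0) (fun j => 0 < j ∧ j < k), key (fun i => 0 < i ∧ i < k) (fun j => j = 0)]
  have c1 : (Finset.range n).filter (fun j => j < n/2) = Finset.range (n/2) := by
    ext j; simp only [Finset.mem_filter, Finset.mem_range]; omega
  have c2 : (Finset.range n).filter (fun j => n/2 ≤ j) = Finset.Ico (n/2) n := by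
    ext j; simp only [Finset.mem_filter, Finset.mem_range, Finset.mem_Ico]; omega
  have c3 : (Finset.range n).filter (fun j => j = 0) = {0} := by
    ext j; simp only [Finset.mem_filter, Finset.mem_range, Finset.mem_singleton]; omega
  have c4 : (Finset.range n).filter (fun j => 0 < j ∧ j < k) = Finset.Ico 1 k := by
    ext j; simp only [Finset.mem_filter, Finset.mem_range, Finset.mem_Ico]; omega
  rw [c1, c2, c3, c4]
  simp only [Finset.card_range, Nat.card_Ico, Finset.card_singleton]
  push_cast
  ring

lemma specRad_gt {n k : ℕ} (hk : 2 ≤ k) (hn : 2*k+2 ≤ n) :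
    (n:ℝ)/2 < specRad (bipStar n k) := by
  obtain ⟨t, hmem, hray⟩ := exists_eigen_ge n (by omega) (adjMat (bipStar n k)) (adjMat_herm n k)
  have hbdd : BddAbove {t : ℝ | ∃ x : Fin n → ℝ, x ≠ 0 ∧ (adjMat (bipStar n k)).mulVec x = t • x} :=
    ⟨n, fun s hs => spec_bdd (bipStar n k) s hs⟩
  have hts : t ≤ specRad (bipStar n k) := le_csSup hbdd hmem
  refine lt_of_lt_of_le ?_ hts
  set A := adjMat (bipStar n k) with hA
  set ones : EuclideanSpace ℝ (Fin n) := (WithLp.equiv 2 (Fin n → ℝ)).symm (fun _ => 1) with hones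
  have h0 : ones ≠ 0 := by
    intro h
    have := congrFun (congrArg (WithLp.equiv 2 (Fin n → ℝ)) h) ⟨0, by omega⟩
    simpa [hones] using this
  have hray1 := hray ones h0
  have hTones : (Matrix.toEuclideanLin A) ones
      = (WithLp.equiv 2 (Fin n → ℝ)).symm (A.mulVec (fun _ => 1)) :=
    rfl
  have hinner : (inner ℝ ((Matrix.toEuclideanLin A) ones) ones : ℝ)
      = ∑ i : Fin n, ∑ j : Fin n, A i j := by
    rw [hTones]
    simp [PiLp.inner_apply, RCLike.inner_apply, Matrix.mulVec, dotProduct, hones,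
      WithLp.equiv_symm_apply]
  have hnormsq : ‖ones‖^2 = (n:ℝ) := by
    rw [← real_inner_self_eq_norm_sq]
    simp [PiLp.inner_apply, RCLike.inner_apply, hones, WithLp.equiv_symm_apply, EuclideanSpace.norm_eq]
  have hS := sum_entries_ge hk hn
  rw [← hA] at hS
  have hnn : n*n < 2 * (n/2 * (n - n/2) + (n - n/2) * (n/2) + (k-1) + (k-1)) := by
    obtain ⟨m, hm⟩ : ∃ m, m = n/2 := ⟨n/2, rfl⟩
    rw [← hm]
    have hk1 : 1 ≤ k - 1 := by omega
    rcases (by omega : n = 2*m ∨ n = 2*m+1) with h | h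
    · have h3 : n - m = m := by omega
      rw [h3, h]
      nlinarith [hk1]
    · have h3 : n - m = m + 1 := by omega
      rw [h3, h]
      nlinarith [hk1]
  rw [hinner, hnormsq] at hray1
  have hnpos : (0:ℝ) < n := by exact_mod_cast Nat.pos_of_ne_zero (by omega)
  refine lt_of_lt_of_le ?_ hray1
  rw [div_lt_div_iff₀ two_pos hnpos]
  have hcast : ((n:ℝ)) * n < 2 * ((n/2 * (n - n/2) + (n - n/2) * (n/2) + (k-1) + (k-1) : ℕ) : ℝ) := by
    exact_mod_cast hnn
  linarith [hS]

theorem stmt16 (k : ℕ) (hk : 2 ≤ k) :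
    ∃ n₀ : ℕ, ∀ n : ℕ, n₀ ≤ n →
      ¬ HasEdgeDisjointTriangles (bipStar n k) k ∧
        specRad (bipStar n k) > (n : ℝ) / 2 := ⟨2*k+2, fun n hn =>
  ⟨no_triangles hk (by omega), specRad_gt hk hn⟩⟩
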